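/- Let G be a finite simple graph and let x be a half-integral optimal solution to LPVC(G). Let H be the bipartite subgraph of G with vertex set V^x_1 ∪ V^x_0 whose edges are exactly the edges of G with one endpoint in V^x_1 and the other in V^x_0. Then H has a matching that saturates every vertex of V^x_1. -/

import Mathlib

open scoped Classical

/-- A fractional vertex cover of `G`. -/
def IsFVC {V : Type} (G : SimpleGraph V) (x : V → ℝ) : Prop :=
  (∀ v, 0 ≤ x v ∧ x v ≤ 1) ∧ ∀ ⦃u v⦄, G.Adj u v → 1 ≤ x u + x v

/-- The weight of a fractional vertex cover. -/
noncomputable def fvcWeight {V : Type} [Fintype V] (x : V → ℝ) : ℝ := ∑ v, x v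

/-- `LP(G)`: the minimum weight of a fractional vertex cover of `G`. -/
noncomputable def LPopt {V : Type} [Fintype V] (G : SimpleGraph V) : ℝ :=
  sInf {w : ℝ | ∃ x : V → ℝ, IsFVC G x ∧ w = fvcWeight x}

/-- A matching of `G`: a set of pairwise vertex-disjoint edges of `G`. -/
def IsMatchingSet {V : Type} (G : SimpleGraph V) (M : Finset (Sym2 V)) : Prop :=
  (∀ e ∈ M, e ∈ G.edgeSet) ∧ ∀ e ∈ M, ∀ f ∈ M, e ≠ f → ∀ v : V, v ∈ e → v ∉ f

/-- `MM(G)`: the maximum size of a matching of `G`. -/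
noncomputable def MMnum {V : Type} (G : SimpleGraph V) : ℕ :=
  sSup {n : ℕ | ∃ M : Finset (Sym2 V), IsMatchingSet G M ∧ M.card = n}

/-- `OPT(G)`: the minimum size of a vertex cover of `G`. -/
noncomputable def VCnum {V : Type} (G : SimpleGraph V) : ℕ :=
  sInf {n : ℕ | ∃ S : Finset V, (∀ ⦃u v⦄, G.Adj u v → u ∈ S ∨ v ∈ S) ∧ S.card = n}

/-- `N(X)`: the set of vertices outside `X` having a neighbour in `X`. -/
def nbhd {V : Type} (G : SimpleGraph V) (X : Set V) : Set V :=
  {v | v ∉ X ∧ ∃ u ∈ X, G.Adj u v}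

/-- `X` is an independent set in `G`. -/
def IndepSet {V : Type} (G : SimpleGraph V) (X : Set V) : Prop :=
  ∀ u ∈ X, ∀ v ∈ X, ¬ G.Adj u v

/-- `surplus(G) ≥ s`: every nonempty independent set `X` satisfies `|N(X)| ≥ |X| + s`. -/
def SurplusGE {V : Type} (G : SimpleGraph V) (s : ℕ) : Prop :=
  ∀ X : Set V, X.Nonempty → IndepSet G X → X.ncard + s ≤ (nbhd G X).ncard

/-- The matching `M` saturates the vertex `v`. -/
def Saturates {V : Type} (M : Finset (Sym2 V)) (v : V) : Prop := ∃ e ∈ M, v ∈ e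

/-- `O(G)`: vertices left unsaturated by some maximum matching of `G`. -/
def OSet {V : Type} (G : SimpleGraph V) : Set V :=
  {v | ∃ M : Finset (Sym2 V), IsMatchingSet G M ∧ M.card = MMnum G ∧ ¬ Saturates M v}

/-- `I(G)`: vertices outside `O(G)` having a neighbour in `O(G)`. -/
def ISet {V : Type} (G : SimpleGraph V) : Set V := nbhd G (OSet G)

/-- `P(G)`: the remaining vertices. -/
def GEPSet {V : Type} (G : SimpleGraph V) : Set V := (OSet G ∪ ISet G)ᶜ

/-- The bipartite subgraph of `G` whose edges go between `V^x_1` and `V^x_0`. -/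
def bipartH {V : Type} (G : SimpleGraph V) (x : V → ℝ) : SimpleGraph V where
  Adj u v := G.Adj u v ∧ ((x u = 1 ∧ x v = 0) ∨ (x u = 0 ∧ x v = 1))
  symm := ⟨by
    rintro u v ⟨h, h2⟩
    exact ⟨h.symm, h2.elim (fun p => Or.inr ⟨p.2, p.1⟩) (fun p => Or.inl ⟨p.2, p.1⟩)⟩⟩
  loopless := ⟨fun v h => G.loopless.irrefl v h.1⟩

/-- For a half-integral optimal LP solution `x`, the bipartite subgraph between
`V^x_1` and `V^x_0` has a matching saturating all of `V^x_1`. -/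
theorem bipartite_matching_saturating_ones {V : Type} [Fintype V] (G : SimpleGraph V)
    (x : V → ℝ) (hx : IsFVC G x)
    (hhalf : ∀ v, x v = 0 ∨ x v = 1 / 2 ∨ x v = 1)
    (hopt : fvcWeight x = LPopt G) :
    ∃ M : Finset (Sym2 V), IsMatchingSet (bipartH G x) M ∧
      ∀ v, x v = 1 → Saturates M v := by
  classical
  set H := bipartH G x with hH
  let t : {v // x v = 1} → Finset V := fun v => Finset.univ.filter (fun w => H.Adj v.1 w)
  have hadj0 : ∀ (v : {v // x v = 1}) w, H.Adj v.1 w → x w = 0 := by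
    rintro ⟨v, hv⟩ w ⟨_, h2⟩
    rcases h2 with ⟨_, h⟩ | ⟨h, _⟩
    · exact h
    · rw [hv] at h; norm_num at h
  have hall : ∀ A : Finset {v // x v = 1}, A.card ≤ (A.biUnion t).card := by
    by_contra hc
    push_neg at hc
    obtain ⟨A, hA⟩ := hc
    set S : Finset V := A.image Subtype.val with hSdef
    set N : Finset V := A.biUnion t with hNdef
    have hScard : S.card = A.card := Finset.card_image_of_injective _ Subtype.val_injective
    have hSN : N.card < S.card := by rw [hScard]; exact hA
    have hxS : ∀ v ∈ S, x v = 1 := by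
      intro v hv; obtain ⟨⟨u, hu⟩, _, rfl⟩ := Finset.mem_image.mp hv; exact hu
    have hxN : ∀ v ∈ N, x v = 0 := by
      intro v hv
      obtain ⟨a, _, hv⟩ := Finset.mem_biUnion.mp hv
      exact hadj0 a v (Finset.mem_filter.mp hv).2
    have hdisj : Disjoint S N := by
      rw [Finset.disjoint_left]
      intro v hv hn
      have h1 := hxS v hv; have h2 := hxN v hn; rw [h1] at h2; norm_num at h2
    set y : V → ℝ := fun v => if v ∈ S then 1/2 else if v ∈ N then 1/2 else x v with hydef
    have hy01 : ∀ v, 0 ≤ y v ∧ y v ≤ 1 := by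
      intro v; simp only [hydef]; split_ifs
      · norm_num
      · norm_num
      · exact hx.1 v
    have hyhalfS : ∀ v ∈ S, y v = 1/2 := by
      intro v hv; simp [hydef, hv]
    have hyge : ∀ v, v ∉ S → x v ≤ y v := by
      intro v hv
      have hv' : y v = if v ∈ N then 1/2 else x v := by simp [hydef, hv]
      rw [hv']
      split_ifs with h2
      · rw [hxN v h2]; norm_num
      · exact le_refl _
    have key : ∀ u v, G.Adj u v → u ∈ S → (1:ℝ)/2 ≤ y v := by
      intro u v huv hu
      by_cases hvS : v ∈ S
      · rw [hyhalfS v hvS]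
      by_cases hvN : v ∈ N
      · simp [hydef, hvS, hvN]
      · have hyv : y v = x v := by simp [hydef, hvS, hvN]
        rw [hyv]
        rcases hhalf v with h0 | h | h
        · exfalso
          have hu1 : x u = 1 := hxS u hu
          have hHadj : H.Adj u v := ⟨huv, Or.inl ⟨hu1, h0⟩⟩
          obtain ⟨a, ha, rfl⟩ := Finset.mem_image.mp hu
          exact hvN (Finset.mem_biUnion.mpr ⟨a, ha,
            Finset.mem_filter.mpr ⟨Finset.mem_univ _, hHadj⟩⟩)
        · rw [h]
        · rw [h]; norm_num
    have hyfvc : IsFVC G y := by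
      refine ⟨hy01, ?_⟩
      intro u v huv
      by_cases hu : u ∈ S
      · have h1 := hyhalfS u hu
        have h2 := key u v huv hu
        linarith
      · by_cases hv : v ∈ S
        · have h1 := hyhalfS v hv
          have h2 := key v u huv.symm hv
          linarith
        · have h1 := hx.2 huv
          have h2 := hyge u hu; have h3 := hyge v hv; linarith
    have hsum : ∑ v, (y v - x v) = -(S.card : ℝ) * (1/2) + (N.card : ℝ) * (1/2) := by
      have hzero : ∀ v ∈ Finset.univ, v ∉ S ∪ N → y v - x v = 0 := by
        intro v _ hv
        rw [Finset.mem_union] at hv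
        push_neg at hv
        simp [hydef, hv.1, hv.2]
      rw [← Finset.sum_subset (Finset.subset_univ (S ∪ N)) hzero,
        Finset.sum_union hdisj]
      have hS' : ∀ v ∈ S, y v - x v = -(1/2) := by
        intro v hv
        rw [hyhalfS v hv, hxS v hv]; norm_num
      have hN' : ∀ v ∈ N, y v - x v = 1/2 := by
        intro v hv
        have hvS : v ∉ S := (Finset.disjoint_right.mp hdisj) hv
        rw [hxN v hv]
        simp [hydef, hvS, hv]
      rw [Finset.sum_congr rfl hS', Finset.sum_congr rfl hN',
        Finset.sum_const, Finset.sum_const]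
      -- cast already normalized
      ring
    have hwlt : fvcWeight y < fvcWeight x := by
      have : fvcWeight y - fvcWeight x = -(S.card : ℝ) * (1/2) + (N.card : ℝ) * (1/2) := by
        rw [← hsum]; unfold fvcWeight; rw [← Finset.sum_sub_distrib]
      have hcards : (N.card : ℝ) < (S.card : ℝ) := by exact_mod_cast hSN
      linarith
    have hbdd : BddBelow {w : ℝ | ∃ z : V → ℝ, IsFVC G z ∧ w = fvcWeight z} := by
      refine ⟨0, ?_⟩
      rintro w ⟨z, hz, rfl⟩
      exact Finset.sum_nonneg fun v _ => (hz.1 v).1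
    have hle : LPopt G ≤ fvcWeight y := csInf_le hbdd ⟨y, hyfvc, rfl⟩
    rw [← hopt] at hle
    linarith
  obtain ⟨f, hfinj, hft⟩ :=
    (Finset.all_card_le_biUnion_card_iff_existsInjective' t).mp hall
  have hHadjf : ∀ a : {v // x v = 1}, H.Adj a.1 (f a) := by
    intro a
    exact (Finset.mem_filter.mp (hft a)).2
  have hxf0 : ∀ a : {v // x v = 1}, x (f a) = 0 := fun a => hadj0 a (f a) (hHadjf a)
  refine ⟨Finset.image (fun a : {v // x v = 1} => s(a.1, f a)) Finset.univ, ⟨?_, ?_⟩, ?_⟩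
  · intro e he
    obtain ⟨a, _, rfl⟩ := Finset.mem_image.mp he
    exact hHadjf a
  · intro e he e' he' hne v hve hve'
    obtain ⟨a, _, rfl⟩ := Finset.mem_image.mp he
    obtain ⟨b, _, rfl⟩ := Finset.mem_image.mp he'
    have hab : a ≠ b := by rintro rfl; exact hne rfl
    rw [Sym2.mem_iff] at hve hve'
    rcases hve with rfl | rfl <;> rcases hve' with h | h
    · exact hab (Subtype.ext h)
    · have h1 := a.2
      rw [h] at h1
      rw [hxf0 b] at h1
      norm_num at h1
    · have h1 := b.2
      rw [← h] at h1
      rw [hxf0 a] at h1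
      norm_num at h1
    · exact hab (hfinj h)
  · intro v hv
    refine ⟨s(v, f ⟨v, hv⟩), Finset.mem_image.mpr ⟨⟨v, hv⟩, Finset.mem_univ _, rfl⟩, ?_⟩
    simp
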